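/- arXiv:2412.00422 — 7 statements merged into one kernel-verified Lean document; each statement's English description precedes it below -/
import Mathlib

section
/- Let g_1, …, g_K be vectors in a real inner product space with ‖g_k‖ ≤ G for all k, let D_1, …, D_K > 0 with D = Σ_{k=1}^K D_k, and let S ⊆ {1, …, K} be nonempty. Then ‖Σ_{k=1}^K (D_k/D)·g_k − (Σ_{k∈S} D_k·g_k)/(Σ_{k∈S} D_k)‖ ≤ (2G/D)·Σ_{k∉S} D_k. -/
open Finset

/-- The gradient error incurred by aggregating only the devices in a nonempty set `S`:
the gap between the full `Dₖ`-weighted average and the partial weighted average is bounded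
by `(2G/D) · Σ_{k ∉ S} Dₖ`, where `G` bounds the norms of the vectors. -/
theorem scheduling_gradient_error_bound
    {E : Type*} [NormedAddCommGroup E] [InnerProductSpace ℝ E] (K : ℕ)
    (g : Fin K → E) (G : ℝ) (hg : ∀ k, ‖g k‖ ≤ G)
    (D : Fin K → ℝ) (hD : ∀ k, 0 < D k)
    (S : Finset (Fin K)) (hS : S.Nonempty) :
    ‖(∑ k, (D k / (∑ j, D j)) • g k)
        - (∑ j ∈ S, D j)⁻¹ • (∑ k ∈ S, D k • g k)‖
      ≤ (2 * G / (∑ j, D j)) * ∑ k ∈ Sᶜ, D k := by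
  obtain ⟨k0, hk0⟩ := hS
  set A := ∑ j, D j with hA
  set B := ∑ j ∈ S, D j with hB
  set C := ∑ k ∈ Sᶜ, D k with hC
  have hApos : 0 < A := Finset.sum_pos (fun k _ => hD k) ⟨k0, Finset.mem_univ k0⟩
  have hBpos : 0 < B := Finset.sum_pos (fun k _ => hD k) ⟨k0, hk0⟩
  have hCnn : 0 ≤ C := Finset.sum_nonneg fun k _ => (hD k).le
  have hABC : B + C = A := Finset.sum_add_sum_compl S D
  have hBA : B ≤ A := by linarith
  have hG : 0 ≤ G := le_trans (norm_nonneg _) (hg k0)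
  have key : (∑ k, (D k / A) • g k) - B⁻¹ • (∑ k ∈ S, D k • g k)
      = (∑ k ∈ S, (D k / A - D k / B) • g k) + ∑ k ∈ Sᶜ, (D k / A) • g k := by
    rw [Finset.smul_sum, ← Finset.sum_add_sum_compl S (fun k => (D k / A) • g k)]
    simp only [sub_smul, smul_smul, Finset.sum_sub_distrib]
    have : ∀ k, D k / B = B⁻¹ * D k := fun k => by rw [div_eq_inv_mul]
    simp only [this]
    abel
  rw [key]
  have h1 : ‖∑ k ∈ S, (D k / A - D k / B) • g k‖ ≤ (C / A) * G := by
    calc ‖∑ k ∈ S, (D k / A - D k / B) • g k‖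
        ≤ ∑ k ∈ S, (D k / B - D k / A) * G := by
          refine (norm_sum_le _ _).trans (Finset.sum_le_sum fun k _ => ?_)
          rw [norm_smul, Real.norm_eq_abs, abs_sub_comm, abs_of_nonneg (by
            have := (hD k).le
            apply sub_nonneg.2
            exact div_le_div_of_nonneg_left (hD k).le hBpos hBA)]
          exact mul_le_mul_of_nonneg_left (hg k) (by
            apply sub_nonneg.2
            exact div_le_div_of_nonneg_left (hD k).le hBpos hBA)
      _ = (B / B - B / A) * G := by
          rw [← Finset.sum_mul, Finset.sum_sub_distrib, ← Finset.sum_div, ← Finset.sum_div]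
      _ = (C / A) * G := by
          rw [div_self hBpos.ne']
          have : (1 : ℝ) - B / A = C / A := by
            field_simp
            linarith
          rw [this]
  have h2 : ‖∑ k ∈ Sᶜ, (D k / A) • g k‖ ≤ (C / A) * G := by
    calc ‖∑ k ∈ Sᶜ, (D k / A) • g k‖
        ≤ ∑ k ∈ Sᶜ, (D k / A) * G := by
          refine (norm_sum_le _ _).trans (Finset.sum_le_sum fun k _ => ?_)
          rw [norm_smul, Real.norm_eq_abs, abs_of_nonneg (div_nonneg (hD k).le hApos.le)]
          exact mul_le_mul_of_nonneg_left (hg k) (div_nonneg (hD k).le hApos.le)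
      _ = (C / A) * G := by rw [← Finset.sum_mul, ← Finset.sum_div]
  calc ‖(∑ k ∈ S, (D k / A - D k / B) • g k) + ∑ k ∈ Sᶜ, (D k / A) • g k‖
      ≤ (C / A) * G + (C / A) * G := (norm_add_le _ _).trans (add_le_add h1 h2)
    _ = (2 * G / A) * C := by ring
end

section
/- Let F : ℝ^d → ℝ be differentiable with L-Lipschitz gradient (L > 0), let F* ∈ ℝ satisfy F* ≤ F(u) for all u, and suppose F satisfies the Polyak–Łojasiewicz inequality with constant δ > 0: ‖∇F(u)‖² ≥ 2δ(F(u) − F*) for all u. For any w, e ∈ ℝ^d, setting w⁺ = w − (1/L)(∇F(w) − e), it holds that F(w⁺) − F* ≤ (1 − δ/L)(F(w) − F*) + (1/(2L))·‖e‖². -/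
open scoped RealInnerProductSpace

lemma descent_lemma
    {d : ℕ} (F : EuclideanSpace ℝ (Fin d) → ℝ) (L : ℝ) (hL : 0 < L)
    (hdiff : Differentiable ℝ F)
    (hlip : ∀ u v : EuclideanSpace ℝ (Fin d),
      ‖gradient F u - gradient F v‖ ≤ L * ‖u - v‖)
    (x v : EuclideanSpace ℝ (Fin d)) :
    F (x + v) ≤ F x + ⟪gradient F x, v⟫ + L / 2 * ‖v‖ ^ 2 := by
  -- g t = F (x + t • v)
  have hgrad : ∀ u, HasGradientAt F (gradient F u) u :=
    fun u => (hdiff u).hasGradientAt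
  have hderiv : ∀ t : ℝ, HasDerivAt (fun t : ℝ => F (x + t • v))
      ⟪gradient F (x + t • v), v⟫ t := by
    intro t
    have h1 : HasFDerivAt F (InnerProductSpace.toDual ℝ _ (gradient F (x + t • v)))
        (x + t • v) := (hgrad (x + t • v)).hasFDerivAt
    have h2 : HasDerivAt (fun t : ℝ => x + t • v) v t := by
      simpa using ((hasDerivAt_id t).smul_const v).const_add x
    exact (h1.comp_hasDerivAt t h2 :)
  have hcont : Continuous (gradient F) := by
    have : LipschitzWith (Real.toNNReal L) (gradient F) := by
      rw [lipschitzWith_iff_dist_le_mul]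
      intro u u'
      rw [dist_eq_norm, dist_eq_norm, Real.coe_toNNReal _ hL.le]
      exact hlip u u'
    exact this.continuous
  have hcontD : Continuous (fun t : ℝ => ⟪gradient F (x + t • v), v⟫) := by
    apply Continuous.inner
    · exact hcont.comp (by continuity)
    · exact continuous_const
  have hint := intervalIntegral.integral_eq_sub_of_hasDerivAt
      (f := fun t : ℝ => F (x + t • v))
      (f' := fun t : ℝ => ⟪gradient F (x + t • v), v⟫)
      (a := 0) (b := 1)
      (fun t _ => hderiv t)
      (hcontD.intervalIntegrable 0 1)
  have key : F (x + v) - F x = ∫ t in (0:ℝ)..1, ⟪gradient F (x + t • v), v⟫ := by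
    rw [hint]; simp
  have hbound : ∀ t ∈ Set.Icc (0:ℝ) 1,
      ⟪gradient F (x + t • v), v⟫ ≤ ⟪gradient F x, v⟫ + L * t * ‖v‖ ^ 2 := by
    intro t ht
    have : ⟪gradient F (x + t • v), v⟫ - ⟪gradient F x, v⟫
        = ⟪gradient F (x + t • v) - gradient F x, v⟫ := by
      rw [inner_sub_left]
    have h2 : ⟪gradient F (x + t • v) - gradient F x, v⟫ ≤ L * t * ‖v‖ ^ 2 := by
      calc ⟪gradient F (x + t • v) - gradient F x, v⟫
          ≤ ‖gradient F (x + t • v) - gradient F x‖ * ‖v‖ := real_inner_le_norm _ _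
        _ ≤ (L * ‖(x + t • v) - x‖) * ‖v‖ := by
            apply mul_le_mul_of_nonneg_right (hlip _ _) (norm_nonneg _)
        _ = L * t * ‖v‖ ^ 2 := by
            rw [add_sub_cancel_left, norm_smul, Real.norm_eq_abs, abs_of_nonneg ht.1]
            ring
    linarith
  have hIle : (∫ t in (0:ℝ)..1, ⟪gradient F (x + t • v), v⟫)
      ≤ ∫ t in (0:ℝ)..1, (⟪gradient F x, v⟫ + L * t * ‖v‖ ^ 2) := by
    apply intervalIntegral.integral_mono_on (by norm_num)
    · exact hcontD.intervalIntegrable 0 1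
    · exact (by continuity : Continuous fun t : ℝ => ⟪gradient F x, v⟫ + L * t * ‖v‖^2).intervalIntegrable 0 1
    · exact hbound
  have hval : (∫ t in (0:ℝ)..1, (⟪gradient F x, v⟫ + L * t * ‖v‖ ^ 2))
      = ⟪gradient F x, v⟫ + L / 2 * ‖v‖ ^ 2 := by
    have : (fun t : ℝ => ⟪gradient F x, v⟫ + L * t * ‖v‖ ^ 2)
        = fun t : ℝ => ⟪gradient F x, v⟫ + (L * ‖v‖ ^ 2) * t := by
      funext t; ring
    rw [this, intervalIntegral.integral_add (continuous_const.intervalIntegrable 0 1)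
      ((show Continuous fun t : ℝ => (L * ‖v‖ ^ 2) * t from continuous_const.mul continuous_id').intervalIntegrable 0 1),
      intervalIntegral.integral_const, intervalIntegral.integral_const_mul]
    simp [integral_id]
    ring
  linarith [key ▸ hIle.trans_eq hval]

/-- One-step contraction of the optimality gap under the PL inequality with an inexact
gradient step `w⁺ = w - (1/L)(∇F w - e)`:
`F w⁺ - F* ≤ (1 - δ/L)(F w - F*) + (1/(2L))‖e‖²`. -/
theorem pl_one_step_contraction
    (d : ℕ) (F : EuclideanSpace ℝ (Fin d) → ℝ) (L δ Fstar : ℝ)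
    (hL : 0 < L) (hδ : 0 < δ)
    (hdiff : Differentiable ℝ F)
    (hlip : ∀ u v : EuclideanSpace ℝ (Fin d),
      ‖gradient F u - gradient F v‖ ≤ L * ‖u - v‖)
    (hlow : ∀ u, Fstar ≤ F u)
    (hPL : ∀ u, 2 * δ * (F u - Fstar) ≤ ‖gradient F u‖ ^ 2)
    (w e : EuclideanSpace ℝ (Fin d)) :
    F (w - (1 / L) • (gradient F w - e)) - Fstar
      ≤ (1 - δ / L) * (F w - Fstar) + (1 / (2 * L)) * ‖e‖ ^ 2 := by
  set g := gradient F w with hg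
  have hdesc := descent_lemma F L hL hdiff hlip w (-((1 / L) • (g - e)))
  rw [← sub_eq_add_neg] at hdesc
  have hinner : ⟪g, -((1 / L) • (g - e))⟫ = -(1/L) * (‖g‖^2 - ⟪g, e⟫) := by
    rw [inner_neg_right, real_inner_smul_right, inner_sub_right,
      real_inner_self_eq_norm_sq]
    ring
  have hnrm : ‖-((1 / L) • (g - e))‖ ^ 2 = (1/L)^2 * (‖g‖^2 - 2 * ⟪g, e⟫ + ‖e‖^2) := by
    rw [norm_neg, norm_smul, mul_pow, norm_sub_sq_real, Real.norm_eq_abs, sq_abs]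
  rw [hinner, hnrm] at hdesc
  have hpl := hPL w
  rw [← hg] at hpl
  have hLne : L ≠ 0 := hL.ne'
  have key : F (w - (1 / L) • (g - e)) ≤ F w - (1/(2*L)) * ‖g‖^2 + (1/(2*L)) * ‖e‖^2 := by
    have : L / 2 * ((1/L)^2 * (‖g‖^2 - 2 * ⟪g, e⟫ + ‖e‖^2))
        = (1/(2*L)) * ‖g‖^2 - (1/L) * ⟪g, e⟫ + (1/(2*L)) * ‖e‖^2 := by
      field_simp
    rw [this] at hdesc
    have h2 : (1:ℝ)/L = 2*(1/(2*L)) := by field_simp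
    nlinarith [hdesc]
  have hpl' : (1/(2*L)) * (2 * δ * (F w - Fstar)) ≤ (1/(2*L)) * ‖g‖^2 := by
    apply mul_le_mul_of_nonneg_left hpl
    positivity
  have : (1/(2*L)) * (2 * δ * (F w - Fstar)) = (δ/L) * (F w - Fstar) := by
    field_simp
  rw [this] at hpl'
  have : (1 - δ/L) * (F w - Fstar) = (F w - Fstar) - (δ/L) * (F w - Fstar) := by ring
  rw [this]
  linarith
end

section
/- Let B, σ², E, γ, s > 0. The equation B·x·log₂(1 + E·γ/(B·σ²·x)) = s has a solution x > 0 if and only if E·γ > s·σ²·ln 2; moreover, when a solution exists it is unique. -/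
open Real Filter Set

lemma aux_key (u : ℝ) (hu : 0 < u) : u / (1 + u) < Real.log (1 + u) := by
  have h1 : (0:ℝ) < 1 + u := by linarith
  have h2 : (1+u)⁻¹ < 1 := by
    rw [inv_lt_one_iff₀]; right; linarith
  have h3 := Real.log_lt_sub_one_of_pos (x := (1+u)⁻¹) (by positivity) h2.ne
  rw [Real.log_inv] at h3
  have h4 : (1+u)⁻¹ - 1 = -(u/(1+u)) := by field_simp; ring
  linarith [h3.trans_eq h4]

lemma aux_cont (c : ℝ) (hc : 0 < c) :
    ContinuousOn (fun x : ℝ => x * Real.log (1 + c / x)) (Set.Ioi 0) := by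
  apply continuousOn_id.mul
  apply ContinuousOn.log
  · exact continuousOn_const.add (continuousOn_const.div continuousOn_id
      fun x hx => (mem_Ioi.mp hx).ne')
  · intro x hx
    have : (0:ℝ) < 1 + c / x := by
      have := mem_Ioi.mp hx; positivity
    exact this.ne'

lemma aux_mono (c : ℝ) (hc : 0 < c) :
    StrictMonoOn (fun x : ℝ => x * Real.log (1 + c / x)) (Set.Ioi 0) := by
  apply strictMonoOn_of_deriv_pos (convex_Ioi 0) (aux_cont c hc)
  intro x hx
  rw [interior_Ioi] at hx
  have hx0 : (0:ℝ) < x := hx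
  have hne : x ≠ 0 := hx0.ne'
  have h1 : (0:ℝ) < 1 + c / x := by positivity
  have hd1 : HasDerivAt (fun y : ℝ => 1 + c / y) (c * -(x ^ 2)⁻¹) x := by
    simpa [div_eq_mul_inv] using ((hasDerivAt_inv hne).const_mul c).const_add 1
  have hd2 : HasDerivAt (fun y : ℝ => Real.log (1 + c / y))
      (c * -(x ^ 2)⁻¹ / (1 + c / x)) x := hd1.log h1.ne'
  have hd3 : HasDerivAt (fun y : ℝ => y * Real.log (1 + c / y))
      (1 * Real.log (1 + c / x) + x * (c * -(x ^ 2)⁻¹ / (1 + c / x))) x :=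
    (hasDerivAt_id x).mul hd2
  rw [hd3.deriv]
  have hkey := aux_key (c / x) (by positivity)
  have heq : x * (c * -(x ^ 2)⁻¹ / (1 + c / x)) = -((c / x) / (1 + c / x)) := by
    field_simp
  rw [heq]
  linarith

lemma aux_lt (c x : ℝ) (hc : 0 < c) (hx : 0 < x) : x * Real.log (1 + c / x) < c := by
  have hu : 0 < c / x := by positivity
  have h1 : Real.log (1 + c / x) < c / x := by
    have := Real.log_lt_sub_one_of_pos (x := 1 + c / x) (by linarith) (by linarith)
    linarith
  calc x * Real.log (1 + c / x) < x * (c / x) := by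
        exact (mul_lt_mul_iff_right₀ hx).mpr h1
    _ = c := by field_simp

lemma aux_tendsto_zero (c : ℝ) (hc : 0 < c) :
    Filter.Tendsto (fun x : ℝ => x * Real.log (1 + c / x)) (nhdsWithin 0 (Set.Ioi 0))
      (nhds 0) := by
  have h1 : Filter.Tendsto (fun x : ℝ => x * Real.log (x + c)) (nhds 0) (nhds 0) := by
    have : ContinuousAt (fun x : ℝ => x * Real.log (x + c)) 0 :=
      continuousAt_id.mul ((Real.continuousAt_log (by simpa using hc.ne')).comp
        (continuousAt_id.add continuousAt_const))
    simpa using this.tendsto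
  have h2 : Filter.Tendsto (fun x : ℝ => x * Real.log x) (nhds 0) (nhds 0) := by
    simpa using Real.continuous_mul_log.tendsto 0
  have h3 : Filter.Tendsto (fun x : ℝ => x * Real.log (x + c) - x * Real.log x)
      (nhdsWithin 0 (Set.Ioi 0)) (nhds 0) := by
    simpa using ((h1.sub h2).mono_left nhdsWithin_le_nhds)
  apply h3.congr'
  filter_upwards [self_mem_nhdsWithin] with x hx
  have hx0 : (0:ℝ) < x := hx
  rw [show (1 : ℝ) + c / x = (x + c) / x by field_simp,
    Real.log_div (by positivity) hx0.ne']
  ring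

/-- Solvability of the transmission-time equation `B·x·log₂(1 + Eγ/(Bσ²x)) = s`:
a positive solution exists iff `E·γ > s·σ²·ln 2`, and in that case it is unique. -/
theorem transmission_time_equation_solvable_iff
    (B σ2 E γ s : ℝ) (hB : 0 < B) (hσ : 0 < σ2) (hE : 0 < E) (hγ : 0 < γ) (hs : 0 < s) :
    ((∃ x > 0, B * x * (Real.log (1 + E * γ / (B * σ2 * x)) / Real.log 2) = s)
      ↔ s * σ2 * Real.log 2 < E * γ)
    ∧ ∀ x y : ℝ, 0 < x → 0 < y →
        B * x * (Real.log (1 + E * γ / (B * σ2 * x)) / Real.log 2) = s →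
        B * y * (Real.log (1 + E * γ / (B * σ2 * y)) / Real.log 2) = s →
        x = y := by
  have hlog2 : 0 < Real.log 2 := Real.log_pos one_lt_two
  set c : ℝ := E * γ / (B * σ2) with hc_def
  have hc : 0 < c := by positivity
  set s' : ℝ := s * Real.log 2 / B with hs'_def
  have hs' : 0 < s' := by positivity
  have harg : ∀ x : ℝ, E * γ / (B * σ2 * x) = c / x := fun x => by
    rw [hc_def, div_div]
  have heq : ∀ x : ℝ, 0 < x →
      ((B * x * (Real.log (1 + E * γ / (B * σ2 * x)) / Real.log 2) = s)
        ↔ x * Real.log (1 + c / x) = s') := by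
    intro x hx
    rw [harg x, hs'_def]
    constructor
    · intro h
      field_simp at h ⊢
      linarith
    · intro h
      field_simp at h ⊢
      linarith
  constructor
  · constructor
    · rintro ⟨x, hx, hxe⟩
      have h1 : x * Real.log (1 + c / x) = s' := (heq x hx).mp hxe
      have h2 : s' < c := h1 ▸ aux_lt c x hc hx
      rw [hs'_def, hc_def, div_lt_div_iff₀ hB (by positivity)] at h2
      nlinarith
    · intro hlt
      have hs'c : s' < c := by
        rw [hs'_def, hc_def, div_lt_div_iff₀ hB (by positivity)]
        nlinarith
      -- find b with g b > s'
      obtain ⟨b, hb1, hb0⟩ := ((Real.tendsto_mul_log_one_add_div_atTop c).eventually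
        (eventually_gt_nhds hs'c)).and (eventually_gt_atTop 0) |>.exists
      -- find a with g a < s', 0 < a < b
      obtain ⟨a, ha1, ha0, hab⟩ := (((aux_tendsto_zero c hc).eventually
        (eventually_lt_nhds hs')).and
        ((eventually_mem_nhdsWithin.and (eventually_nhdsWithin_of_eventually_nhds
          (eventually_lt_nhds hb0))))).exists
      have hsub : Set.Icc a b ⊆ Set.Ioi 0 := fun t ht => lt_of_lt_of_le ha0 ht.1
      obtain ⟨x, hxmem, hxe⟩ := intermediate_value_Icc hab.le
        ((aux_cont c hc).mono hsub) ⟨ha1.le, hb1.le⟩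
      have hx0 : 0 < x := hsub hxmem
      exact ⟨x, hx0, (heq x hx0).mpr hxe⟩
  · intro x y hx hy hxe hye
    exact (aux_mono c hc).injOn (mem_Ioi.mpr hx) (mem_Ioi.mpr hy)
      (((heq x hx).mp hxe).trans ((heq y hy).mp hye).symm)
end

section
/- Let K ∈ ℕ, let τ̃_k ≥ 0 and D_k > 0 for k ∈ {1,…,K}, let ρ ≥ 0 and λ* ≥ 0. Define a*_k = 1 if τ̃_k − λ*·D_k ≤ 0 and a*_k = 0 otherwise. Assume Σ_{k=1}^K (1 − a*_k)·D_k ≤ ρ and λ*·(Σ_{k=1}^K (1 − a*_k)·D_k − ρ) = 0. Then a* is optimal for the relaxed device-scheduling linear program: for every a ∈ ℝ^K with 0 ≤ a_k ≤ 1 for all k and Σ_{k=1}^K (1 − a_k)·D_k ≤ ρ, it holds that Σ_{k=1}^K a*_k·τ̃_k ≤ Σ_{k=1}^K a_k·τ̃_k. -/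
open Finset

/-- Proposition 3: the thresholding rule `a*_k = 1` iff `τ̃_k − λ*·D_k ≤ 0` is optimal for
the relaxed device-scheduling linear program, given primal feasibility and complementary
slackness at the dual variable `λ*`. -/
theorem device_scheduling_threshold_optimal
    (K : ℕ) (τ D : Fin K → ℝ) (hτ : ∀ k, 0 ≤ τ k) (hD : ∀ k, 0 < D k)
    (ρ lam : ℝ) (hρ : 0 ≤ ρ) (hlam : 0 ≤ lam)
    (astar : Fin K → ℝ)
    (hastar : ∀ k, astar k = if τ k - lam * D k ≤ 0 then 1 else 0)
    (hfeas : ∑ k, (1 - astar k) * D k ≤ ρ)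
    (hcs : lam * ((∑ k, (1 - astar k) * D k) - ρ) = 0)
    (a : Fin K → ℝ) (ha0 : ∀ k, 0 ≤ a k) (ha1 : ∀ k, a k ≤ 1)
    (hacon : ∑ k, (1 - a k) * D k ≤ ρ) :
    ∑ k, astar k * τ k ≤ ∑ k, a k * τ k := by
  -- Lagrangian argument
  have key : ∀ k, astar k * τ k + lam * ((1 - astar k) * D k)
      ≤ a k * τ k + lam * ((1 - a k) * D k) := by
    intro k
    have h : ∀ x : ℝ, x * τ k + lam * ((1 - x) * D k)
        = x * (τ k - lam * D k) + lam * D k := by intro x; ring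
    rw [h, h, hastar k]
    by_cases hk : τ k - lam * D k ≤ 0
    · simp only [if_pos hk]
      have := mul_le_mul_of_nonpos_right (ha1 k) hk
      linarith
    · simp only [if_neg hk]
      push_neg at hk
      nlinarith [ha0 k]
  have hsum : ∑ k, (astar k * τ k + lam * ((1 - astar k) * D k))
      ≤ ∑ k, (a k * τ k + lam * ((1 - a k) * D k)) :=
    Finset.sum_le_sum fun k _ => key k
  rw [Finset.sum_add_distrib, Finset.sum_add_distrib, ← Finset.mul_sum, ← Finset.mul_sum] at hsum
  have h1 : lam * (∑ k, (1 - astar k) * D k) = lam * ρ := by linarith [hcs]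
  have h2 : lam * (∑ k, (1 - a k) * D k) ≤ lam * ρ :=
    mul_le_mul_of_nonneg_left hacon hlam
  linarith
end

section
/- Let B, σ², s, E > 0 and K ≥ 1, let g, h_{r,1}, …, h_{r,K} ∈ ℂ^N satisfy the power-homogeneous condition |(h_{r,k})_n| = |(h_{r,1})_n| for all k and n, and suppose the direct links are blocked (h_{d,k} = 0). Let γ* = (Σ_n |g_n|·|(h_{r,1})_n|)² and assume E·γ* > s·σ²·ln 2, so there is a unique τ₁ > 0 with B·τ₁·log₂(1 + E·γ*/(B·σ²·τ₁)) = s; set τ_T = K·τ₁. Suppose τ_N > 0, v ∈ ℂ^N with |v_n| = 1 for all n, and r ∈ ℝ^K satisfy: r_k ≥ 0 and τ_N·r_k ≥ s for all k, and for every subset J ⊆ {1,…,K}, Σ_{k∈J} r_k ≤ B·log₂(1 + Σ_{k∈J} (E/τ_N)·|Σ_n conj(g_n)·v_n·(h_{r,k})_n|²/(B·σ²)). Then τ_T ≤ τ_N. -/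
open Finset

/-- derivative of `t ↦ t * log (1 + c/t)` at `x > 0`. -/
lemma phi_hasDerivAt {c x : ℝ} (hc : 0 < c) (hx : 0 < x) :
    HasDerivAt (fun t : ℝ => t * Real.log (1 + c / t))
      (Real.log (1 + c / x) - c / (x + c)) x := by
  have h1 : 0 < 1 + c / x := by positivity
  have hd1 : HasDerivAt (fun t : ℝ => 1 + c / t) (c * (-(x ^ 2)⁻¹)) x := by
    simpa [div_eq_mul_inv] using ((hasDerivAt_inv hx.ne').const_mul c).const_add 1
  have hd2 : HasDerivAt (fun t : ℝ => Real.log (1 + c / t))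
      (c * (-(x ^ 2)⁻¹) / (1 + c / x)) x := hd1.log h1.ne'
  have hd : HasDerivAt (fun t : ℝ => t * Real.log (1 + c / t))
      (1 * Real.log (1 + c / x) + x * (c * (-(x ^ 2)⁻¹) / (1 + c / x))) x :=
    (hasDerivAt_id x).mul hd2
  have heq : 1 * Real.log (1 + c / x) + x * (c * (-(x ^ 2)⁻¹) / (1 + c / x)) =
      Real.log (1 + c / x) - c / (x + c) := by
    have hxc : x + c ≠ 0 := by positivity
    field_simp
    ring
  rw [heq] at hd
  exact hd

lemma phi_strictMonoOn {c : ℝ} (hc : 0 < c) :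
    StrictMonoOn (fun t : ℝ => t * Real.log (1 + c / t)) (Set.Ioi 0) := by
  apply strictMonoOn_of_deriv_pos (convex_Ioi 0)
  · intro x hx
    exact ((phi_hasDerivAt hc hx).continuousAt).continuousWithinAt
  · intro x hx
    rw [interior_Ioi] at hx
    have hx : (0:ℝ) < x := hx
    rw [(phi_hasDerivAt hc hx).deriv]
    have hxc : 0 < x + c := by positivity
    have hlt : Real.log (x / (x + c)) < x / (x + c) - 1 := by
      apply Real.log_lt_sub_one_of_pos (by positivity)
      intro h
      have : x = x + c := by
        field_simp at h
        linarith
      linarith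
    have hlog : Real.log (x / (x + c)) = - Real.log (1 + c / x) := by
      rw [Real.log_div hx.ne' hxc.ne']
      have : 1 + c / x = (x + c) / x := by field_simp
      rw [this, Real.log_div hxc.ne' hx.ne']
      ring
    have hval : x / (x + c) - 1 = - (c / (x + c)) := by
      field_simp
      ring
    rw [hlog, hval] at hlt
    linarith

/-- Theorem 3, first direction (power-homogeneous setting): with blocked direct links,
equal per-element cascaded channel magnitudes across devices, and equal communication
energies `E`, the I-TDMA uploading latency `τ_T = K·τ₁` (each device using its own optimal
IRS phase vector, with channel power gain `γ* = (Σ_n |g_n||(h_{r,1})_n|)²`) is at most any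
feasible I-NOMA uploading latency `τ_N`. -/
theorem tdma_le_noma_power_homogeneous
    (B σ2 s E : ℝ) (hB : 0 < B) (hσ : 0 < σ2) (hs : 0 < s) (hE : 0 < E)
    (K N : ℕ) (hK : 0 < K)
    (g : Fin N → ℂ) (hr : Fin K → Fin N → ℂ)
    (hom : ∀ k n, ‖hr k n‖ = ‖hr ⟨0, hK⟩ n‖)
    (γstar : ℝ)
    (hγstar : γstar = (∑ n, ‖g n‖ * ‖hr ⟨0, hK⟩ n‖) ^ 2)
    (hsolv : s * σ2 * Real.log 2 < E * γstar)
    (τ₁ : ℝ) (hτ₁pos : 0 < τ₁)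
    (hτ₁ : B * τ₁ * (Real.log (1 + E * γstar / (B * σ2 * τ₁)) / Real.log 2) = s)
    -- feasible I-NOMA point with common phase vector `v` and rates `r`
    (τN : ℝ) (hτN : 0 < τN)
    (v : Fin N → ℂ) (hv : ∀ n, ‖v n‖ = 1)
    (r : Fin K → ℝ) (hr0 : ∀ k, 0 ≤ r k) (hrs : ∀ k, s ≤ τN * r k)
    (hcap : ∀ J : Finset (Fin K),
      ∑ k ∈ J, r k ≤ B *
        (Real.log (1 + (∑ k ∈ J, (E / τN) *
            ‖∑ n, starRingEnd ℂ (g n) * v n * hr k n‖ ^ 2) / (B * σ2))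
          / Real.log 2)) :
    (K : ℝ) * τ₁ ≤ τN := by
  have hK' : (0:ℝ) < (K:ℝ) := by exact_mod_cast hK
  have hlog2 : (0:ℝ) < Real.log 2 := Real.log_pos (by norm_num)
  -- γstar > 0
  have hγpos : 0 < γstar := by
    by_contra h
    push_neg at h
    have : E * γstar ≤ 0 := mul_nonpos_of_nonneg_of_nonpos hE.le h
    nlinarith [mul_pos (mul_pos hs hσ) hlog2]
  set c : ℝ := E * γstar / (B * σ2) with hc
  have hcpos : 0 < c := by positivity
  -- bound each channel gain by γstar
  have habs : ∀ k : Fin K,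
      ‖∑ n, starRingEnd ℂ (g n) * v n * hr k n‖ ^ 2 ≤ γstar := by
    intro k
    have h1 : ‖∑ n, starRingEnd ℂ (g n) * v n * hr k n‖ ≤
        ∑ n, ‖g n‖ * ‖hr ⟨0, hK⟩ n‖ := by
      refine le_trans (norm_sum_le _ _) (le_of_eq ?_)
      refine Finset.sum_congr rfl fun n _ => ?_
      rw [norm_mul, norm_mul, Complex.norm_conj, hv n, hom k n]
      ring
    have h0 : 0 ≤ ‖∑ n, starRingEnd ℂ (g n) * v n * hr k n‖ :=
      norm_nonneg _
    rw [hγstar]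
    exact pow_le_pow_left₀ h0 h1 2
  -- sum bound
  have hsum : (∑ k : Fin K, (E / τN) *
      ‖∑ n, starRingEnd ℂ (g n) * v n * hr k n‖ ^ 2)
      ≤ (K : ℝ) * ((E / τN) * γstar) := by
    calc (∑ k : Fin K, (E / τN) *
        ‖∑ n, starRingEnd ℂ (g n) * v n * hr k n‖ ^ 2)
        ≤ ∑ _k : Fin K, (E / τN) * γstar := by
          refine Finset.sum_le_sum fun k _ => ?_
          exact mul_le_mul_of_nonneg_left (habs k) (by positivity)
      _ = (K : ℝ) * ((E / τN) * γstar) := by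
          simp [Finset.sum_const, Finset.card_univ, nsmul_eq_mul]
  -- from hcap on univ
  have hKs : (K : ℝ) * s ≤ τN * ∑ k : Fin K, r k := by
    have : (∑ _k : Fin K, s) ≤ ∑ k : Fin K, τN * r k :=
      Finset.sum_le_sum fun k _ => hrs k
    simpa [Finset.sum_const, Finset.card_univ, nsmul_eq_mul, Finset.mul_sum] using this
  have hcapU := hcap Finset.univ
  have hmono : Real.log (1 + (∑ k : Fin K, (E / τN) *
      ‖∑ n, starRingEnd ℂ (g n) * v n * hr k n‖ ^ 2) / (B * σ2))
      ≤ Real.log (1 + (K : ℝ) * ((E / τN) * γstar) / (B * σ2)) := by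
    apply Real.log_le_log
    · have : (0:ℝ) ≤ (∑ k : Fin K, (E / τN) *
          ‖∑ n, starRingEnd ℂ (g n) * v n * hr k n‖ ^ 2) / (B * σ2) := by
        apply div_nonneg _ (by positivity)
        exact Finset.sum_nonneg fun k _ => by positivity
      linarith
    · have h := (div_le_div_iff_of_pos_right (by positivity : (0:ℝ) < B * σ2)).mpr hsum
      linarith
  -- put things together: s ≤ φ-type bound at τ' = τN / K
  set τ' : ℝ := τN / (K : ℝ) with hτ'
  have hτ'pos : 0 < τ' := by positivity
  have e1 : 1 + (K : ℝ) * ((E / τN) * γstar) / (B * σ2) = 1 + c / τ' := by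
    rw [hc, hτ']
    field_simp
  have key : (K : ℝ) * s ≤ (K : ℝ) * (B * τ' * (Real.log (1 + c / τ') / Real.log 2)) := by
    have h2 : τN * (∑ k : Fin K, r k) ≤
        τN * (B * (Real.log (1 + c / τ') / Real.log 2)) := by
      apply mul_le_mul_of_nonneg_left _ hτN.le
      rw [← e1]
      calc (∑ k : Fin K, r k) ≤ _ := hcapU
        _ ≤ B * (Real.log (1 + (K : ℝ) * ((E / τN) * γstar) / (B * σ2)) / Real.log 2) := by
            apply mul_le_mul_of_nonneg_left _ hB.le
            exact div_le_div_of_nonneg_right hmono hlog2.le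
    have h3 : τN * (B * (Real.log (1 + c / τ') / Real.log 2)) =
        (K : ℝ) * (B * τ' * (Real.log (1 + c / τ') / Real.log 2)) := by
      rw [hτ']; field_simp
    calc (K : ℝ) * s ≤ τN * ∑ k : Fin K, r k := hKs
      _ ≤ _ := h2
      _ = _ := h3
  have key2 : s ≤ B * τ' * (Real.log (1 + c / τ') / Real.log 2) :=
    le_of_mul_le_mul_left key hK'
  -- rewrite hτ₁ in terms of c
  have hτ₁' : B * τ₁ * (Real.log (1 + c / τ₁) / Real.log 2) = s := by
    rw [hc, div_div]; exact hτ₁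
  have hφ : τ₁ * Real.log (1 + c / τ₁) ≤ τ' * Real.log (1 + c / τ') := by
    have hA : B * τ₁ * (Real.log (1 + c / τ₁) / Real.log 2) =
        (B / Real.log 2) * (τ₁ * Real.log (1 + c / τ₁)) := by ring
    have hB' : B * τ' * (Real.log (1 + c / τ') / Real.log 2) =
        (B / Real.log 2) * (τ' * Real.log (1 + c / τ')) := by ring
    have hle : (B / Real.log 2) * (τ₁ * Real.log (1 + c / τ₁)) ≤
        (B / Real.log 2) * (τ' * Real.log (1 + c / τ')) := by
      rw [← hA, ← hB', hτ₁']; exact key2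
    exact le_of_mul_le_mul_left hle (by positivity)
  have hττ : τ₁ ≤ τ' :=
    ((phi_strictMonoOn hcpos).le_iff_le (Set.mem_Ioi.mpr hτ₁pos)
      (Set.mem_Ioi.mpr hτ'pos)).mp hφ
  calc (K : ℝ) * τ₁ ≤ (K : ℝ) * τ' := by
        exact mul_le_mul_of_nonneg_left hττ hK'.le
    _ = τN := by rw [hτ']; field_simp
end

section
/- Let B, σ², s > 0 and K ≥ 1, let g, h_{r,1}, …, h_{r,K} ∈ ℂ^N with blocked direct links (h_{d,k} = 0), and suppose the phase-homogeneous condition holds: for each n, the phases arg(conj(g_n)·(h_{r,k})_n) coincide for all k (whenever the products are nonzero). Let E_k > 0, set γ_k = (Σ_n |g_n|·|(h_{r,k})_n|)², assume E_k·γ_k > s·σ²·ln 2, let τ_k > 0 be the unique solution of B·τ_k·log₂(1 + E_k·γ_k/(B·σ²·τ_k)) = s, and set τ_T = Σ_k τ_k. Then: (i) there exists a common phase vector v ∈ ℂ^N with |v_n| = 1 for all n such that |Σ_n conj(g_n)·v_n·(h_{r,k})_n|² = γ_k for every k simultaneously; and (ii) for every subset J ⊆ {1,…,K}, |J|·s ≤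 B·τ_T·log₂(1 + Σ_{k∈J} E_k·γ_k/(B·σ²·τ_T)). In particular, the rate vector r_k = s/τ_T satisfies all the I-NOMA capacity-region constraints at time τ_T, so the optimal I-NOMA uploading latency is at most the I-TDMA uploading latency τ_T. -/
open Finset

lemma sum_mul_log_le {ι : Type*} (J : Finset ι) (τ d : ι → ℝ)
    (hτ : ∀ k ∈ J, 0 < τ k) (hd : ∀ k ∈ J, 0 < d k) (T : ℝ) (hT : 0 < T)
    (hST : ∑ k ∈ J, τ k ≤ T) :
    ∑ k ∈ J, τ k * Real.log (1 + d k / τ k) ≤ T * Real.log (1 + (∑ k ∈ J, d k) / T) := by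
  classical
  rcases J.eq_empty_or_nonempty with rfl | hne
  · simp
  set S := ∑ k ∈ J, τ k with hS
  set D := ∑ k ∈ J, d k with hD
  have hSpos : 0 < S := Finset.sum_pos hτ hne
  have hDpos : 0 < D := Finset.sum_pos hd hne
  have hcc : ConcaveOn ℝ (Set.Ioi 0) Real.log := (strictConcaveOn_log_Ioi.concaveOn)
  -- Step 1: Jensen
  have jensen := hcc.le_map_sum (t := J) (w := fun k => τ k / S)
    (p := fun k => 1 + d k / τ k)
    (fun k hk => div_nonneg (hτ k hk).le hSpos.le)
    (by rw [← Finset.sum_div]; field_simp; rfl)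
    (fun k hk => by
      have := hτ k hk; have := hd k hk
      simp only [Set.mem_Ioi]; positivity)
  have hpt : (∑ k ∈ J, (τ k / S) • (1 + d k / τ k)) = 1 + D / S := by
    have : ∀ k ∈ J, (τ k / S) • (1 + d k / τ k) = τ k / S + d k / S := by
      intro k hk
      have h1 := (hτ k hk).ne'
      have h2 := hSpos.ne'
      field_simp
      linear_combination (d k + τ k) * (τ k * (τ k)⁻¹) * (mul_inv_cancel₀ h2) + (d k + τ k) * (mul_inv_cancel₀ h1)
    rw [Finset.sum_congr rfl this, Finset.sum_add_distrib, ← Finset.sum_div, ← Finset.sum_div]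
    field_simp
    rfl
  rw [hpt] at jensen
  have step1 : ∑ k ∈ J, τ k * Real.log (1 + d k / τ k) ≤ S * Real.log (1 + D / S) := by
    have : ∑ k ∈ J, τ k * Real.log (1 + d k / τ k)
        = S * ∑ k ∈ J, (τ k / S) • Real.log (1 + d k / τ k) := by
      rw [Finset.mul_sum]
      refine Finset.sum_congr rfl fun k hk => ?_
      have := hSpos.ne'
      field_simp [smul_eq_mul]
      rw [smul_eq_mul]; linear_combination (-(τ k * Real.log (1 + d k / τ k))) * mul_inv_cancel₀ this
    rw [this]
    exact mul_le_mul_of_nonneg_left jensen hSpos.le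
  -- Step 2: monotonicity in T
  have step2 : S * Real.log (1 + D / S) ≤ T * Real.log (1 + D / T) := by
    have hx : (1 + D / S) ∈ Set.Ioi (0:ℝ) := by simp only [Set.mem_Ioi]; positivity
    have hy : (1:ℝ) ∈ Set.Ioi (0:ℝ) := by norm_num
    have ha : 0 ≤ S / T := by positivity
    have hb : 0 ≤ 1 - S / T := by
      have : S / T ≤ 1 := (div_le_one hT).2 hST
      linarith
    have key := hcc.2 hx hy ha hb (by ring)
    simp only [smul_eq_mul, Real.log_one, mul_zero, mul_one, add_zero] at key
    have harg : S / T * (1 + D / S) + (1 - S / T) = 1 + D / T := by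
      field_simp
      ring
    rw [harg] at key
    calc S * Real.log (1 + D / S) = T * (S / T * Real.log (1 + D / S)) := by
          field_simp
      _ ≤ T * Real.log (1 + D / T) := mul_le_mul_of_nonneg_left key hT.le
  linarith


lemma phase_align {K N : ℕ} (g : Fin N → ℂ) (hr : Fin K → Fin N → ℂ)
    (hom : ∀ n, ∀ k l : Fin K,
      starRingEnd ℂ (g n) * hr k n ≠ 0 → starRingEnd ℂ (g n) * hr l n ≠ 0 →
      Complex.arg (starRingEnd ℂ (g n) * hr k n)
        = Complex.arg (starRingEnd ℂ (g n) * hr l n)) :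
    ∃ v : Fin N → ℂ, (∀ n, ‖v n‖ = 1) ∧
      ∀ k, ‖∑ n, starRingEnd ℂ (g n) * v n * hr k n‖ ^ 2
        = (∑ n, ‖g n‖ * ‖hr k n‖) ^ 2 := by
  classical
  set P : Fin N → Fin K → ℂ := fun n k => starRingEnd ℂ (g n) * hr k n with hP
  refine ⟨fun n => if h : ∃ k, P n k ≠ 0 then
      Complex.exp (-(Complex.I * Complex.arg (P n h.choose))) else 1, ?_, ?_⟩
  · intro n
    by_cases h : ∃ k, P n k ≠ 0 <;> simp [h, Complex.norm_exp]
  · intro k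
    have key : ∀ n, starRingEnd ℂ (g n) *
        (if h : ∃ k, P n k ≠ 0 then
          Complex.exp (-(Complex.I * Complex.arg (P n h.choose))) else 1) * hr k n
        = ((‖g n‖ * ‖hr k n‖ : ℝ) : ℂ) := by
      intro n
      by_cases hz : P n k = 0
      · have habs : ‖g n‖ * ‖hr k n‖ = 0 := by
          have : ‖P n k‖ = 0 := by rw [hz]; simp
          simpa [hP, map_mul, Complex.norm_conj] using this
        rw [habs]
        have : starRingEnd ℂ (g n) * hr k n = 0 := hz
        push_cast
        rcases mul_eq_zero.1 this with h | h <;> simp [h]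
      · have hex : ∃ k, P n k ≠ 0 := ⟨k, hz⟩
        rw [dif_pos hex]
        have harg : Complex.arg (P n hex.choose) = Complex.arg (P n k) :=
          hom n hex.choose k hex.choose_spec hz
        have habs : ‖P n k‖ = ‖g n‖ * ‖hr k n‖ := by
          simp [hP, map_mul, Complex.norm_conj]
        have h1 : starRingEnd ℂ (g n) *
            Complex.exp (-(Complex.I * Complex.arg (P n hex.choose))) * hr k n
            = Complex.exp (-(Complex.I * Complex.arg (P n k))) * P n k := by
          rw [harg, hP]; ring
        rw [h1, ← habs]
        set a : ℝ := Complex.arg (P n k) with ha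
        calc Complex.exp (-(Complex.I * a)) * P n k
            = Complex.exp (-(Complex.I * a)) *
              ((‖P n k‖ : ℂ) * Complex.exp (a * Complex.I)) := by
              rw [Complex.norm_mul_exp_arg_mul_I (P n k)]
          _ = (‖P n k‖ : ℂ) *
              Complex.exp (-(Complex.I * a) + a * Complex.I) := by
              rw [Complex.exp_add]; ring
          _ = (‖P n k‖ : ℂ) := by
              rw [show -(Complex.I * (a:ℂ)) + a * Complex.I = 0 by ring,
                Complex.exp_zero, mul_one]
    rw [Finset.sum_congr rfl fun n _ => key n, ← Complex.ofReal_sum, Complex.norm_real, Real.norm_eq_abs,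
      abs_of_nonneg (Finset.sum_nonneg fun n _ => by positivity)]


/-- Theorem 3, second direction (phase-homogeneous setting): with blocked direct links and
identical cascaded-channel phases across devices, (i) a single common unit-modulus IRS
phase vector simultaneously achieves every device's maximal channel power gain
`γ_k = (Σ_n |g_n||(h_{r,k})_n|)²`, and (ii) for every subset `J` of devices,
`|J|·s ≤ B·τ_T·log₂(1 + Σ_{k∈J} E_k γ_k/(B σ² τ_T))` where `τ_T = Σ_k τ_k` is the I-TDMA
uploading latency; hence I-NOMA with time `τ_T` and rates `s/τ_T` is feasible. -/
theorem noma_le_tdma_phase_homogeneous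
    (B σ2 s : ℝ) (hB : 0 < B) (hσ : 0 < σ2) (hs : 0 < s)
    (K N : ℕ) (hK : 0 < K)
    (g : Fin N → ℂ) (hr : Fin K → Fin N → ℂ)
    (hom : ∀ n, ∀ k l : Fin K,
      starRingEnd ℂ (g n) * hr k n ≠ 0 → starRingEnd ℂ (g n) * hr l n ≠ 0 →
      Complex.arg (starRingEnd ℂ (g n) * hr k n)
        = Complex.arg (starRingEnd ℂ (g n) * hr l n))
    (E : Fin K → ℝ) (hE : ∀ k, 0 < E k)
    (γ : Fin K → ℝ)
    (hγ : ∀ k, γ k = (∑ n, ‖g n‖ * ‖hr k n‖) ^ 2)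
    (hsolv : ∀ k, s * σ2 * Real.log 2 < E k * γ k)
    (τ : Fin K → ℝ) (hτpos : ∀ k, 0 < τ k)
    (hτeq : ∀ k,
      B * τ k * (Real.log (1 + E k * γ k / (B * σ2 * τ k)) / Real.log 2) = s) :
    (∃ v : Fin N → ℂ, (∀ n, ‖v n‖ = 1) ∧
        ∀ k, ‖∑ n, starRingEnd ℂ (g n) * v n * hr k n‖ ^ 2 = γ k)
    ∧ (∀ J : Finset (Fin K),
        (J.card : ℝ) * s ≤ B * (∑ k, τ k) *
          (Real.log (1 + (∑ k ∈ J, E k * γ k) / (B * σ2 * (∑ k, τ k)))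
            / Real.log 2)) := by
  constructor
  · obtain ⟨v, hv1, hv2⟩ := phase_align g hr hom
    exact ⟨v, hv1, fun k => by rw [hγ k]; exact hv2 k⟩
  · intro J
    have hlog2 : 0 < Real.log 2 := Real.log_pos one_lt_two
    have hne : Nonempty (Fin K) := ⟨⟨0, hK⟩⟩
    set τT := ∑ k, τ k with hτT
    have hτTpos : 0 < τT := Finset.sum_pos (fun k _ => hτpos k) Finset.univ_nonempty
    set d : Fin K → ℝ := fun k => E k * γ k / (B * σ2) with hdd
    have hEγ : ∀ k, 0 < E k * γ k := fun k =>
      lt_trans (by positivity) (hsolv k)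
    have hd : ∀ k, 0 < d k := fun k => div_pos (hEγ k) (by positivity)
    have hST : ∑ k ∈ J, τ k ≤ τT :=
      Finset.sum_le_sum_of_subset_of_nonneg (Finset.subset_univ J)
        (fun k _ _ => (hτpos k).le)
    have key := sum_mul_log_le J τ d (fun k _ => hτpos k) (fun k _ => hd k) τT hτTpos hST
    have hs' : ∀ k, s = B / Real.log 2 * (τ k * Real.log (1 + d k / τ k)) := by
      intro k
      rw [← hτeq k]
      have h2 : E k * γ k / (B * σ2 * τ k) = d k / τ k := by
        rw [hdd, div_div]
      rw [h2]; ring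
    have hdsum : (∑ k ∈ J, E k * γ k) / (B * σ2 * τT) = (∑ k ∈ J, d k) / τT := by
      rw [hdd, ← Finset.sum_div, div_div]
    calc (J.card : ℝ) * s = ∑ _k ∈ J, s := by rw [Finset.sum_const, nsmul_eq_mul]
      _ = B / Real.log 2 * ∑ k ∈ J, τ k * Real.log (1 + d k / τ k) := by
          rw [Finset.mul_sum]; exact Finset.sum_congr rfl fun k _ => hs' k
      _ ≤ B / Real.log 2 * (τT * Real.log (1 + (∑ k ∈ J, d k) / τT)) :=
          mul_le_mul_of_nonneg_left key (by positivity)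
      _ = B * τT * (Real.log (1 + (∑ k ∈ J, E k * γ k) / (B * σ2 * τT)) / Real.log 2) := by
          rw [hdsum]; ring
end

section
/- Fix B, σ², s, ξ > 0 and for each k ∈ {1,…,K}: E^max_k > 0, C_k > 0, D_k > 0 and an effective channel power gain γ_k > 0. Suppose (a, τ, τ_loc, E^c, f) is feasible for the I-TDMA latency problem with fixed channel gains: a ∈ {0,1}^K; τ_k ≥ 0; τ_loc > 0; E^c_k ≥ 0; f_k ≥ 0; for every k: E^c_k + ξ·C_k·D_k·f_k² ≤ E^max_k, a_k·C_k·D_k ≤ τ_loc·f_k, and if a_k = 1 then τ_k > 0 and B·τ_k·log₂(1 + E^c_k·γ_k/(B·σ²·τ_k)) ≥ s. Then the point with CPU frequencies f'_k = a_k·C_k·D_k/τ_loc, the same a, τ, τ_loc, and communication energies E'^c_k = E^max_k − ξ·C_k·D_k·f'_k² ≥ E^c_k is also feasible and attains an objective value Σ_k τ_k + τ_loc no larger than the original; consequently, there exists an optimal solution in which f_k = a_k·C_k·D_k/τ_loc for every k. -/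
open Finset

/-- Proposition 1: from any feasible point of the I-TDMA latency problem with fixed
channel gains, resetting the CPU frequencies to `f'_k = a_k·C_k·D_k/τ_loc` (so all
scheduled devices finish local computation exactly at the deadline `τ_loc`) and using the
freed energy for communication, `E'_k = E^max_k − ξ C_k D_k f'_k² ≥ E^c_k`, yields another
feasible point with the same (hence no larger) objective `Σ_k τ_k + τ_loc`. -/
theorem tdma_optimal_cpu_frequency
    (B σ2 s ξ : ℝ) (hB : 0 < B) (hσ : 0 < σ2) (hs : 0 < s) (hξ : 0 < ξ)
    (K : ℕ) (Emax C D γ : Fin K → ℝ)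
    (hEmax : ∀ k, 0 < Emax k) (hC : ∀ k, 0 < C k) (hD : ∀ k, 0 < D k)
    (hγ : ∀ k, 0 < γ k)
    (a τ : Fin K → ℝ) (τloc : ℝ) (Ec f : Fin K → ℝ)
    (ha : ∀ k, a k = 0 ∨ a k = 1)
    (hτ : ∀ k, 0 ≤ τ k) (hτloc : 0 < τloc)
    (hEc : ∀ k, 0 ≤ Ec k) (hf : ∀ k, 0 ≤ f k)
    (henergy : ∀ k, Ec k + ξ * C k * D k * f k ^ 2 ≤ Emax k)
    (hcomp : ∀ k, a k * C k * D k ≤ τloc * f k)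
    (hrate : ∀ k, a k = 1 → 0 < τ k ∧
      s ≤ B * τ k * (Real.log (1 + Ec k * γ k / (B * σ2 * τ k)) / Real.log 2)) :
    -- the reset point: f' k = a k C k D k / τloc, E' k = Emax k − ξ C k D k f' k ²
    (∀ k, Ec k ≤ Emax k - ξ * C k * D k * (a k * C k * D k / τloc) ^ 2) ∧
    (∀ k, 0 ≤ a k * C k * D k / τloc) ∧
    (∀ k, 0 ≤ Emax k - ξ * C k * D k * (a k * C k * D k / τloc) ^ 2) ∧
    (∀ k, (Emax k - ξ * C k * D k * (a k * C k * D k / τloc) ^ 2)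
        + ξ * C k * D k * (a k * C k * D k / τloc) ^ 2 ≤ Emax k) ∧
    (∀ k, a k * C k * D k ≤ τloc * (a k * C k * D k / τloc)) ∧
    (∀ k, a k = 1 → 0 < τ k ∧
      s ≤ B * τ k *
        (Real.log (1 + (Emax k - ξ * C k * D k * (a k * C k * D k / τloc) ^ 2) * γ k
          / (B * σ2 * τ k)) / Real.log 2)) ∧
    ((∑ k, τ k) + τloc ≤ (∑ k, τ k) + τloc) := by
  have hf'le : ∀ k, a k * C k * D k / τloc ≤ f k := fun k => by
    rw [div_le_iff₀ hτloc]; linarith [hcomp k]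
  have hf'nn : ∀ k, 0 ≤ a k * C k * D k / τloc := fun k => by
    apply div_nonneg _ hτloc.le
    rcases ha k with h | h <;> rw [h] <;> nlinarith [(hC k).le, (hD k).le]
  have hsq : ∀ k, (a k * C k * D k / τloc) ^ 2 ≤ f k ^ 2 := fun k =>
    pow_le_pow_left₀ (hf'nn k) (hf'le k) 2
  have hkey : ∀ k, Ec k ≤ Emax k - ξ * C k * D k * (a k * C k * D k / τloc) ^ 2 := fun k => by
    have h1 : 0 ≤ ξ * C k * D k := mul_nonneg (mul_nonneg hξ.le (hC k).le) (hD k).le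
    have := mul_le_mul_of_nonneg_left (hsq k) h1
    linarith [henergy k]
  refine ⟨hkey, hf'nn, fun k => le_trans (hEc k) (hkey k), fun k => by linarith,
    fun k => by rw [mul_div_cancel₀ _ hτloc.ne'], ?_, le_refl _⟩
  intro k hk
  obtain ⟨hτk, hr⟩ := hrate k hk
  refine ⟨hτk, le_trans hr ?_⟩
  have hden : 0 < B * σ2 * τ k := by positivity
  have harg : 1 + Ec k * γ k / (B * σ2 * τ k) ≤
      1 + (Emax k - ξ * C k * D k * (a k * C k * D k / τloc) ^ 2) * γ k / (B * σ2 * τ k) := by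
    have := mul_le_mul_of_nonneg_right (hkey k) (hγ k).le
    gcongr
  have hEck := hEc k
  have hpos : (0:ℝ) < 1 + Ec k * γ k / (B * σ2 * τ k) := by
    have : 0 ≤ Ec k * γ k / (B * σ2 * τ k) := div_nonneg (mul_nonneg hEck (hγ k).le) hden.le
    linarith
  have hlog := Real.log_le_log hpos harg
  have h2 : (0:ℝ) < Real.log 2 := Real.log_pos (by norm_num)
  have hBτ : (0:ℝ) ≤ B * τ k := by positivity
  gcongr
end
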